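/- arXiv:2605.18886 — 4 statements merged into one kernel-verified Lean document; each statement's English description precedes it below -/
import Mathlib

section
/- For bounded linear operators L₀ and L₁ on a Banach space and ε ∈ ℂ, setting L_ε = L₀ + ε L₁, Duhamel's principle holds: exp(t L_ε) = exp(t L₀) + ε ∫₀ᵗ exp((t−s) L₀) ∘ L₁ ∘ exp(s L_ε) ds for all t ≥ 0. -/
open MeasureTheory intervalIntegral

/-- Duhamel's principle for a perturbed bounded generator on a Banach space. -/
theorem duhamel_principle
    (X : Type*) [NormedAddCommGroup X] [NormedSpace ℂ X] [CompleteSpace X]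
    (L₀ L₁ : X →L[ℂ] X) (ε : ℂ) (Lε : X →L[ℂ] X) (hLε : Lε = L₀ + ε • L₁)
    (t : ℝ) (ht : 0 ≤ t) :
    NormedSpace.exp ((t : ℂ) • Lε) =
      NormedSpace.exp ((t : ℂ) • L₀) +
        ε • ∫ s in (0:ℝ)..t,
          NormedSpace.exp (((t - s : ℝ) : ℂ) • L₀) * L₁ * NormedSpace.exp ((s : ℂ) • Lε) := by
  set F : ℝ → (X →L[ℂ] X) := fun s =>
    NormedSpace.exp (((t - s : ℝ) : ℂ) • L₀) * NormedSpace.exp ((s : ℂ) • Lε) with hF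
  have hderiv : ∀ s : ℝ, HasDerivAt F
      (ε • (NormedSpace.exp (((t - s : ℝ) : ℂ) • L₀) * L₁ *
        NormedSpace.exp ((s : ℂ) • Lε))) s := by
    intro s
    have h1 : HasDerivAt (fun s : ℝ => NormedSpace.exp (((t - s : ℝ) : ℂ) • L₀))
        (-(L₀ * NormedSpace.exp (((t - s : ℝ) : ℂ) • L₀))) s := by
      have hc : HasDerivAt (fun u : ℂ => NormedSpace.exp (u • L₀))
          (L₀ * NormedSpace.exp ((((t - s : ℝ) : ℂ)) • L₀)) ((t - s : ℝ) : ℂ) :=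
        hasDerivAt_exp_smul_const' L₀ _
      have hu0 : HasDerivAt (fun s : ℝ => (s : ℂ)) (1 : ℂ) s := by
        simpa using (hasDerivAt_id s).ofReal_comp
      have hu : HasDerivAt (fun s : ℝ => ((t - s : ℝ) : ℂ)) (-1 : ℂ) s := by
        have := hu0.const_sub (t : ℂ)
        simp only [Complex.ofReal_sub]
        simpa using this
      have := hc.scomp s hu
      simpa [neg_smul, Function.comp_def] using this
    have h2 : HasDerivAt (fun s : ℝ => NormedSpace.exp ((s : ℂ) • Lε))
        (Lε * NormedSpace.exp ((s : ℂ) • Lε)) s := by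
      have hc : HasDerivAt (fun u : ℂ => NormedSpace.exp (u • Lε))
          (Lε * NormedSpace.exp ((s : ℂ) • Lε)) (s : ℂ) :=
        hasDerivAt_exp_smul_const' Lε _
      have hu : HasDerivAt (fun s : ℝ => (s : ℂ)) (1 : ℂ) s := by
        simpa using (hasDerivAt_id s).ofReal_comp
      simpa [Function.comp_def] using hc.scomp s hu
    have := h1.mul h2
    refine (show HasDerivAt F _ s from this).congr_deriv (Eq.symm ?_)
    have hcomm : NormedSpace.exp (((t - s : ℝ) : ℂ) • L₀) * L₀ =
        L₀ * NormedSpace.exp (((t - s : ℝ) : ℂ) • L₀) := by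
      have := Commute.smul_left (Commute.refl L₀) (((t - s : ℝ) : ℂ))
      exact this.exp_left.eq
    rw [hLε]
    simp only [add_mul, mul_add, ← mul_assoc, hcomm, smul_mul_assoc, mul_smul_comm,
      neg_mul]
    abel
  have hcont : Continuous (fun s : ℝ =>
      ε • (NormedSpace.exp (((t - s : ℝ) : ℂ) • L₀) * L₁ *
        NormedSpace.exp ((s : ℂ) • Lε))) := by
    letI : NormedAlgebra ℚ (X →L[ℂ] X) := NormedAlgebra.restrictScalars ℚ ℂ _
    have h1 : Continuous fun s : ℝ => NormedSpace.exp (((t - s : ℝ) : ℂ) • L₀) :=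
      NormedSpace.exp_continuous.comp (by fun_prop)
    have h2 : Continuous fun s : ℝ => NormedSpace.exp ((s : ℂ) • Lε) :=
      NormedSpace.exp_continuous.comp (by fun_prop)
    exact ((h1.mul continuous_const).mul h2).const_smul ε
  have key : ∫ s in (0:ℝ)..t,
      ε • (NormedSpace.exp (((t - s : ℝ) : ℂ) • L₀) * L₁ *
        NormedSpace.exp ((s : ℂ) • Lε)) = F t - F 0 :=
    intervalIntegral.integral_eq_sub_of_hasDerivAt (fun s _ => hderiv s)
      (hcont.intervalIntegrable 0 t)
  rw [intervalIntegral.integral_smul] at key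
  have hF0 : F 0 = NormedSpace.exp ((t : ℂ) • L₀) := by
    simp [hF, NormedSpace.exp_zero]
  have hFt : F t = NormedSpace.exp ((t : ℂ) • Lε) := by
    simp [hF, NormedSpace.exp_zero]
  rw [hF0, hFt] at key
  rw [key]
  abel
end

section
/- For bounded linear operators A and B on a Banach space, ‖exp(t(A+B)) − exp(tA) exp(tB)‖ ≤ t² ‖[A,B]‖ e^{t(‖A‖+‖B‖)} / 2 + O(t³), and more precisely ‖exp(t(A+B)) − exp(tA)exp(tB)‖ ≤ (t²/2)‖[A,B]‖ e^{t(‖A‖+‖B‖)} for all t ≥ 0, where [A,B] = AB − BA. -/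
open NormedSpace intervalIntegral MeasureTheory

section helpers

variable {M : Type*} [NormedRing M] [NormedAlgebra ℝ M] [CompleteSpace M]

/-- Norm bound for the exponential, assuming `‖1‖ ≤ 1`. -/
lemma my_norm_exp_le (h1 : ‖(1 : M)‖ ≤ 1) (x : M) :
    ‖NormedSpace.exp x‖ ≤ Real.exp ‖x‖ := by
  rw [NormedSpace.exp_eq_tsum ℝ]
  calc ‖∑' n : ℕ, ((Nat.factorial n : ℝ))⁻¹ • x ^ n‖
      ≤ ∑' n : ℕ, ‖((Nat.factorial n : ℝ))⁻¹ • x ^ n‖ :=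
        norm_tsum_le_tsum_norm (NormedSpace.norm_expSeries_summable' x)
    _ ≤ ∑' n : ℕ, ‖x‖ ^ n / (Nat.factorial n : ℝ) := by
        refine Summable.tsum_le_tsum (fun n => ?_) (NormedSpace.norm_expSeries_summable' x)
          (Real.summable_pow_div_factorial _)
        rw [norm_smul, norm_inv, Real.norm_natCast, div_eq_inv_mul]
        refine mul_le_mul_of_nonneg_left ?_ (by positivity)
        cases n with
        | zero => simpa using h1
        | succ n => exact norm_pow_le' x (Nat.succ_pos n)
    _ = Real.exp ‖x‖ := by
        rw [Real.exp_eq_exp_ℝ, NormedSpace.exp_eq_tsum_div]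

lemma trotter_alg1 (q r a b : M) :
    (q * a) * (b * r) + q * (b * (-(a * r))) = q * ((a * b - b * a) * r) := by
  noncomm_ring

lemma trotter_alg2 (p q r a b : M) (hq : a * q = q * a) :
    (-(p * (a + b))) * (q * r) + p * ((q * a) * r + q * (b * r))
      = p * ((q * b - b * q) * r) := by
  rw [← hq]; noncomm_ring

end helpers

set_option maxHeartbeats 1000000 in
/-- First-order Trotter error bound for bounded operators. -/
theorem trotter_first_order_bound
    (X : Type*) [NormedAddCommGroup X] [NormedSpace ℂ X] [CompleteSpace X]
    (A B : X →L[ℂ] X) (t : ℝ) (ht : 0 ≤ t) :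
    ‖NormedSpace.exp ((t : ℂ) • (A + B)) -
        NormedSpace.exp ((t : ℂ) • A) * NormedSpace.exp ((t : ℂ) • B)‖ ≤
      t ^ 2 / 2 * ‖A * B - B * A‖ * Real.exp (t * (‖A‖ + ‖B‖)) := by
  have h1 : ‖(1 : X →L[ℂ] X)‖ ≤ 1 := ContinuousLinearMap.norm_id_le
  have hcoe : ∀ (r : ℝ) (x : X →L[ℂ] X), (r : ℂ) • x = r • x := fun r x => by
    rw [← algebraMap_smul ℂ r x]; norm_num
  have hEE : (NormedSpace.exp : (X →L[ℂ] X) → (X →L[ℂ] X)) = NormedSpace.exp :=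
    rfl
  rw [hcoe, hcoe, hcoe, hEE]
  set S : X →L[ℂ] X := A + B with hS
  set C : X →L[ℂ] X := A * B - B * A with hC
  -- exponential norm bounds
  have hnorm : ∀ (s : ℝ) (Y : X →L[ℂ] X), 0 ≤ s → ‖NormedSpace.exp (s • Y)‖ ≤ Real.exp (s * ‖Y‖) := by
    intro s Y hs
    refine (my_norm_exp_le h1 _).trans (Real.exp_le_exp.2 (le_of_eq ?_))
    have h := norm_smul s Y
    rw [Real.norm_eq_abs, abs_of_nonneg hs] at h
    exact h
  -- commutator bound: ‖exp(s•A) * B - B * exp(s•A)‖ ≤ s * (‖C‖ * exp (s‖A‖))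
  have comm_bound : ∀ s : ℝ, 0 ≤ s →
      ‖NormedSpace.exp (s • A) * B - B * NormedSpace.exp (s • A)‖
        ≤ s * (‖C‖ * Real.exp (s * ‖A‖)) := by
    intro s hs
    set G : ℝ → (X →L[ℂ] X) := fun u => NormedSpace.exp (u • A) * (B * NormedSpace.exp ((s - u) • A))
      with hG
    set G' : ℝ → (X →L[ℂ] X) := fun u =>
      NormedSpace.exp (u • A) * (C * NormedSpace.exp ((s - u) • A)) with hG'
    have hderiv : ∀ u : ℝ, HasDerivAt G (G' u) u := by
      intro u
      have h2 : HasDerivAt (fun u : ℝ => NormedSpace.exp ((s - u) • A))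
          (-(A * NormedSpace.exp ((s - u) • A))) u := by
        have := (hasDerivAt_exp_smul_const' (𝕂 := ℝ) A (s - u)).scomp u
          ((hasDerivAt_id u).const_sub s)
        simpa [Function.comp_def] using this
      have hB := HasDerivAt.const_mul B h2
      have := (hasDerivAt_exp_smul_const (𝕂 := ℝ) A u).mul hB
      refine this.congr_deriv ?_
      exact (trotter_alg1 _ _ _ _)
    have hbound : ∀ u ∈ Set.Icc (0:ℝ) s, ‖G' u‖ ≤ ‖C‖ * Real.exp (s * ‖A‖) := by
      intro u hu
      obtain ⟨hu0, hus⟩ := hu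
      calc ‖G' u‖ ≤ ‖NormedSpace.exp (u • A)‖ * (‖C‖ * ‖NormedSpace.exp ((s - u) • A)‖) :=
            (norm_mul_le _ _).trans (by gcongr; exact norm_mul_le _ _)
        _ ≤ Real.exp (u * ‖A‖) * (‖C‖ * Real.exp ((s - u) * ‖A‖)) := by
            gcongr
            · exact hnorm u A hu0
            · exact hnorm (s - u) A (by linarith)
        _ = ‖C‖ * (Real.exp (u * ‖A‖) * Real.exp ((s - u) * ‖A‖)) := by ring
        _ = ‖C‖ * Real.exp (s * ‖A‖) := by rw [← Real.exp_add]; ring_nf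
    have := (convex_Icc (0:ℝ) s).norm_image_sub_le_of_norm_hasDerivWithin_le
      (fun u hu => (hderiv u).hasDerivWithinAt) hbound
      (Set.left_mem_Icc.2 hs) (Set.right_mem_Icc.2 hs)
    have hGs : G s = NormedSpace.exp (s • A) * B := by
      simp [hG, NormedSpace.exp_zero]
    have hG0 : G 0 = B * NormedSpace.exp (s • A) := by
      simp [hG, NormedSpace.exp_zero]
    rw [hGs, hG0] at this
    calc ‖NormedSpace.exp (s • A) * B - B * NormedSpace.exp (s • A)‖
        ≤ ‖C‖ * Real.exp (s * ‖A‖) * ‖s - 0‖ := this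
      _ = s * (‖C‖ * Real.exp (s * ‖A‖)) := by
          rw [sub_zero, Real.norm_eq_abs, abs_of_nonneg hs]; ring
  -- main function
  set F : ℝ → (X →L[ℂ] X) := fun u =>
    NormedSpace.exp ((t - u) • S) * (NormedSpace.exp (u • A) * NormedSpace.exp (u • B))
    with hF
  set F' : ℝ → (X →L[ℂ] X) := fun u =>
    NormedSpace.exp ((t - u) • S) *
      ((NormedSpace.exp (u • A) * B - B * NormedSpace.exp (u • A)) *
        NormedSpace.exp (u • B)) with hF'
  have hderiv : ∀ u : ℝ, HasDerivAt F (F' u) u := by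
    intro u
    have hP : HasDerivAt (fun u : ℝ => NormedSpace.exp ((t - u) • S))
        (-(NormedSpace.exp ((t - u) • S) * S)) u := by
      have := (hasDerivAt_exp_smul_const (𝕂 := ℝ) S (t - u)).scomp u
        ((hasDerivAt_id u).const_sub t)
      simpa [Function.comp_def] using this
    have hQR := (hasDerivAt_exp_smul_const (𝕂 := ℝ) A u).mul
      (hasDerivAt_exp_smul_const' (𝕂 := ℝ) B u)
    have := hP.mul hQR
    refine this.congr_deriv ?_
    refine (trotter_alg2 _ _ _ _ _ ?_)
    exact (((Commute.refl A).smul_right u).exp_right).eq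
  set K : ℝ := ‖C‖ * Real.exp (t * (‖A‖ + ‖B‖)) with hK
  have hbound : ∀ u ∈ Set.Icc (0:ℝ) t, ‖F' u‖ ≤ u * K := by
    intro u hu
    obtain ⟨hu0, hut⟩ := hu
    calc ‖F' u‖ ≤ ‖NormedSpace.exp ((t - u) • S)‖ *
          (‖NormedSpace.exp (u • A) * B - B * NormedSpace.exp (u • A)‖ *
            ‖NormedSpace.exp (u • B)‖) :=
          (norm_mul_le _ _).trans (by gcongr; exact norm_mul_le _ _)
      _ ≤ Real.exp ((t - u) * (‖A‖ + ‖B‖)) *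
            ((u * (‖C‖ * Real.exp (u * ‖A‖))) * Real.exp (u * ‖B‖)) := by
          gcongr
          · exact (hnorm (t - u) S (by linarith)).trans (by
              gcongr
              exact norm_add_le A B)
          · exact comm_bound u hu0
          · exact hnorm u B hu0
      _ = u * (‖C‖ * (Real.exp ((t - u) * (‖A‖ + ‖B‖)) * Real.exp (u * ‖A‖) *
            Real.exp (u * ‖B‖))) := by ring
      _ = u * K := by
          rw [← Real.exp_add, ← Real.exp_add, hK]
          ring_nf
  have hFcont : Continuous F' := by
    have hc : ∀ Y : X →L[ℂ] X, Continuous fun u : ℝ => NormedSpace.exp (u • Y) := fun Y =>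
      (continuous_iff_continuousAt.2 fun x => (NormedSpace.exp_analytic (𝕂 := ℝ) x).continuousAt).comp (continuous_id.smul continuous_const)
    have hc2 : Continuous fun u : ℝ => NormedSpace.exp ((t - u) • S) :=
      (continuous_iff_continuousAt.2 fun x => (NormedSpace.exp_analytic (𝕂 := ℝ) x).continuousAt).comp ((continuous_const.sub continuous_id).smul continuous_const)
    exact hc2.mul ((((hc A).mul continuous_const).sub
      (continuous_const.mul (hc A))).mul (hc B))
  have hint : IntervalIntegrable F' volume 0 t := hFcont.intervalIntegrable _ _
  have hFTC : ∫ u in (0:ℝ)..t, F' u = F t - F 0 :=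
    intervalIntegral.integral_eq_sub_of_hasDerivAt (fun u _ => hderiv u) hint
  have hFt : F t = NormedSpace.exp (t • A) * NormedSpace.exp (t • B) := by
    simp [hF, NormedSpace.exp_zero]
  have hF0 : F 0 = NormedSpace.exp (t • S) := by
    simp [hF, NormedSpace.exp_zero]
  have hmain : ‖NormedSpace.exp (t • S) -
      NormedSpace.exp (t • A) * NormedSpace.exp (t • B)‖
      = ‖∫ u in (0:ℝ)..t, F' u‖ := by
    rw [hFTC, hFt, hF0, norm_sub_rev]
  rw [hmain]
  have hKnonneg : 0 ≤ K := mul_nonneg (norm_nonneg _) (Real.exp_pos _).le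
  have hbd : ‖∫ u in (0:ℝ)..t, F' u‖ ≤ |∫ u in (0:ℝ)..t, u * K| := by
    refine intervalIntegral.norm_integral_le_abs_of_norm_le ?_
      ((continuous_id.mul continuous_const).intervalIntegrable _ _)
    refine (ae_restrict_iff' measurableSet_uIoc).2 (Filter.Eventually.of_forall fun u hu => ?_)
    rw [Set.uIoc_of_le ht] at hu
    exact hbound u ⟨hu.1.le, hu.2⟩
  refine hbd.trans ?_
  rw [intervalIntegral.integral_mul_const, integral_id]
  rw [abs_of_nonneg (mul_nonneg (by nlinarith [sq_nonneg t]) hKnonneg)]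
  rw [hK, hC]
  ring_nf
  exact le_refl _
end

section
/- Let L and P be linear operators on a finite-dimensional space with P² = P, L P = P L = 0, and ‖exp(tL)(I−P)‖ ≤ C e^{-γt} for γ > 0. Then the Drazin-type inverse L⁺ := -∫₀^∞ exp(tL)(I−P) dt is a well-defined bounded operator with ‖L⁺‖ ≤ C/γ, and it satisfies L L⁺ = L⁺ L = I − P. -/
open MeasureTheory Set

private theorem drazin_exp_int (γ : ℝ) (hγ : 0 < γ) :
    ∫ t in Ioi (0:ℝ), Real.exp (-γ * t) = 1/γ := by
  have h : ∀ x ∈ Ici (0:ℝ), HasDerivAt (fun x => -Real.exp (-γ*x)/γ) (Real.exp (-γ*x)) x := by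
    intro x _
    have h1 := (((Real.hasDerivAt_exp (-γ*x)).comp x
      ((hasDerivAt_id x).const_mul (-γ))).div_const γ).neg
    simpa [Function.comp, neg_div, mul_neg, neg_neg, mul_div_assoc, div_self hγ.ne', Pi.neg_def] using h1
  have hlim : Filter.Tendsto (fun x : ℝ => -Real.exp (-γ*x)/γ) Filter.atTop (nhds 0) := by
    have : Filter.Tendsto (fun x : ℝ => -Real.exp (-γ*x)/γ) Filter.atTop (nhds (-0/γ)) :=
      Filter.Tendsto.div_const ((Real.tendsto_exp_atBot.comp
        (Filter.tendsto_id.const_mul_atTop_of_neg (by linarith))).neg) γ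
    simpa using this
  have := integral_Ioi_of_hasDerivAt_of_tendsto' h (exp_neg_integrableOn_Ioi 0 hγ) hlim
  rw [this]; simp [Real.exp_zero]; ring

/-- The Drazin-type inverse given by the Laplace integral of the semigroup. -/
theorem drazin_inverse_integral
    (E : Type*) [NormedAddCommGroup E] [NormedSpace ℂ E] [FiniteDimensional ℂ E]
    (L P : E →L[ℂ] E) (hP : P * P = P) (hLP : L * P = 0) (hPL : P * L = 0)
    (C γ : ℝ) (hγ : 0 < γ)
    (hdecay : ∀ t : ℝ, 0 ≤ t →
      ‖NormedSpace.exp ((t : ℂ) • L) * (1 - P)‖ ≤ C * Real.exp (-γ * t)) :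
    IntegrableOn (fun t : ℝ => NormedSpace.exp ((t : ℂ) • L) * (1 - P)) (Set.Ioi 0) ∧
    (let Lplus : E →L[ℂ] E :=
        -∫ t in Set.Ioi (0:ℝ), NormedSpace.exp ((t : ℂ) • L) * (1 - P)
     ‖Lplus‖ ≤ C / γ ∧ L * Lplus = 1 - P ∧ Lplus * L = 1 - P) := by
  set F : ℝ → (E →L[ℂ] E) := fun t => NormedSpace.exp ((t : ℂ) • L) * (1 - P) with hFdef
  -- the real and complex exponentials agree
  have hsm : ∀ u : ℝ, ((u : ℂ) • L) = u • L := fun u => by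
    rw [← Complex.coe_algebraMap, algebraMap_smul]
  have hF : ∀ t : ℝ, F t = NormedSpace.exp (t • L) * (1 - P) := fun t => by
    simp only [hFdef]; rw [hsm t]
  -- continuity
  have hcont : Continuous F := by
    letI : NormedAlgebra ℚ (E →L[ℂ] E) := .restrictScalars ℚ ℂ _
    have : Continuous fun t : ℝ => NormedSpace.exp (t • L) * (1 - P) :=
      (NormedSpace.exp_continuous.comp (continuous_id.smul continuous_const)).mul
        continuous_const
    exact this.congr fun t => (hF t).symm
  -- integrability
  have hg : IntegrableOn (fun t : ℝ => C * Real.exp (-γ * t)) (Ioi 0) :=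
    (exp_neg_integrableOn_Ioi 0 hγ).const_mul C
  have hbound : ∀ᵐ t ∂(volume.restrict (Ioi (0:ℝ))), ‖F t‖ ≤ C * Real.exp (-γ * t) := by
    rw [ae_restrict_iff' measurableSet_Ioi]
    exact ae_of_all _ fun t ht => hdecay t ht.le
  have hint : IntegrableOn F (Ioi 0) :=
    Integrable.mono' hg (hcont.aestronglyMeasurable.restrict) hbound
  -- derivative
  have hderiv : ∀ t : ℝ, HasDerivAt F (L * F t) t := by
    intro t
    have h1 : HasDerivAt (fun u : ℝ => NormedSpace.exp (u • L))
        (L * NormedSpace.exp (t • L)) t := hasDerivAt_exp_smul_const' L t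
    have h2 := h1.mul_const ((1 : E →L[ℂ] E) - P)
    have h3 : HasDerivAt F (L * NormedSpace.exp (t • L) * (1 - P)) t := by
      refine HasDerivAt.congr_of_eventuallyEq h2 ?_
      exact Filter.Eventually.of_forall fun u => hF u
    rw [hF t]
    simpa [mul_assoc] using h3
  -- L commutes with F t, and F t * L = L * F t = exp * L
  have hcommL : ∀ t : ℝ, F t * L = L * F t := by
    intro t
    have hc : NormedSpace.exp ((t:ℂ) • L) * L = L * NormedSpace.exp ((t:ℂ) • L) :=
      (((Commute.refl L).smul_left ((t:ℂ))).exp_left).eq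
    have e1 : F t * L = NormedSpace.exp ((t:ℂ) • L) * L := by
      rw [hFdef]
      simp only [mul_assoc, sub_mul, one_mul, hPL, sub_zero]
    have e2 : L * F t = NormedSpace.exp ((t:ℂ) • L) * L := by
      rw [hFdef]
      simp only [← mul_assoc, ← hc]
      rw [mul_assoc, mul_sub, mul_one, hLP, sub_zero]
    rw [e1, e2]
  -- tendsto 0 at infinity
  have htend : Filter.Tendsto F Filter.atTop (nhds 0) := by
    apply squeeze_zero_norm' (f := F) (a := fun t => C * Real.exp (-γ * t))
    · filter_upwards [Filter.eventually_ge_atTop (0:ℝ)] with t ht using hdecay t ht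
    · have h0 : Filter.Tendsto (fun t : ℝ => Real.exp (-γ * t)) Filter.atTop (nhds 0) :=
        Real.tendsto_exp_atBot.comp (Filter.tendsto_id.const_mul_atTop_of_neg (by linarith))
      simpa using h0.const_mul C
  -- F 0 = 1 - P
  have hF0 : F 0 = 1 - P := by
    rw [hFdef]
    simp [NormedSpace.exp_zero]
  -- integrability of L * F
  have hintL : IntegrableOn (fun t : ℝ => L * F t) (Ioi 0) :=
    (ContinuousLinearMap.mul ℂ (E →L[ℂ] E) L).integrable_comp hint
  -- FTC
  have key : ∫ t in Ioi (0:ℝ), L * F t = -(1 - P) := by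
    have := integral_Ioi_of_hasDerivAt_of_tendsto (a := 0) (m := 0)
      (hcont.continuousWithinAt) (fun x _ => hderiv x) hintL htend
    rw [this, hF0, zero_sub]
  -- pull L out of the integral
  have hLI : L * (∫ t in Ioi (0:ℝ), F t) = -(1 - P) := by
    rw [← key]
    exact ((ContinuousLinearMap.mul ℂ (E →L[ℂ] E) L).integral_comp_comm hint).symm
  have hIL : (∫ t in Ioi (0:ℝ), F t) * L = -(1 - P) := by
    have := ((ContinuousLinearMap.mul ℂ (E →L[ℂ] E)).flip L).integral_comp_comm hint
    simp only [ContinuousLinearMap.flip_apply, ContinuousLinearMap.mul_apply'] at this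
    rw [← this]
    rw [← key]
    exact setIntegral_congr_fun measurableSet_Ioi fun t _ => hcommL t
  -- norm bound
  have hnorm : ‖∫ t in Ioi (0:ℝ), F t‖ ≤ C / γ := by
    calc ‖∫ t in Ioi (0:ℝ), F t‖ ≤ ∫ t in Ioi (0:ℝ), ‖F t‖ :=
          norm_integral_le_integral_norm F
      _ ≤ ∫ t in Ioi (0:ℝ), C * Real.exp (-γ * t) :=
          integral_mono_ae hint.norm hg hbound
      _ = C * ∫ t in Ioi (0:ℝ), Real.exp (-γ * t) := integral_const_mul C _
      _ = C / γ := by rw [drazin_exp_int γ hγ]; ring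
  refine ⟨hint, ?_, ?_, ?_⟩
  · simpa using hnorm
  · show L * (-∫ t in Ioi (0:ℝ), F t) = 1 - P
    rw [mul_neg, hLI, neg_neg]
  · show (-∫ t in Ioi (0:ℝ), F t) * L = 1 - P
    rw [neg_mul, hIL, neg_neg]
end

section
/- If a linear map Φ on d×d matrices is positive (maps positive semidefinite matrices to positive semidefinite matrices) and trace-preserving, then Φ is a contraction in trace norm on Hermitian matrices: ‖Φ(X)‖₁ ≤ ‖X‖₁ for every Hermitian X. -/
open Matrix
open scoped ComplexOrder

/-- The trace norm of a complex matrix: the trace of `√(XᴴX)`. -/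
noncomputable def traceNorm {m : Type*} [Fintype m] [DecidableEq m]
    (X : Matrix m m ℂ) : ℝ :=
  ((Matrix.posSemidef_conjTranspose_mul_self X).1.eigenvectorUnitary.1 *
    diagonal (((↑) : ℝ → ℂ) ∘ (√·) ∘ (Matrix.posSemidef_conjTranspose_mul_self X).1.eigenvalues) *
    (star (Matrix.posSemidef_conjTranspose_mul_self X).1.eigenvectorUnitary : Matrix m m ℂ)).trace.re

section aux

variable {n : Type*} [Fintype n] [DecidableEq n]

lemma traceNorm_hermitian_eq {Y : Matrix n n ℂ} (hY : Y.IsHermitian) :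
    traceNorm Y = ∑ i, |hY.eigenvalues i| := by
  set U : Matrix n n ℂ := (hY.eigenvectorUnitary : Matrix n n ℂ) with hUdef
  have hUU : star U * U = 1 := hY.eigenvectorUnitary.2.1
  set D : Matrix n n ℂ := diagonal (fun i => ((|hY.eigenvalues i| : ℝ) : ℂ)) with hDdef
  have hDps : D.PosSemidef := by
    refine PosSemidef.diagonal fun i => ?_
    simp only [Pi.zero_apply]
    exact_mod_cast abs_nonneg (hY.eigenvalues i)
  have hS : (U * D * star U).PosSemidef := by
    simpa [Matrix.star_eq_conjTranspose] using hDps.mul_mul_conjTranspose_same U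
  have hDD : D * D = diagonal (RCLike.ofReal ∘ hY.eigenvalues) *
      diagonal (RCLike.ofReal ∘ hY.eigenvalues) := by
    rw [hDdef, diagonal_mul_diagonal, diagonal_mul_diagonal]
    have : (fun i => ((|hY.eigenvalues i| : ℝ) : ℂ) * ((|hY.eigenvalues i| : ℝ) : ℂ))
        = fun i => (RCLike.ofReal ∘ hY.eigenvalues) i * (RCLike.ofReal ∘ hY.eigenvalues) i := by
      funext i
      show ((|hY.eigenvalues i| : ℝ) : ℂ) * ((|hY.eigenvalues i| : ℝ) : ℂ)
        = ((hY.eigenvalues i : ℝ) : ℂ) * ((hY.eigenvalues i : ℝ) : ℂ)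
      norm_cast
      rw [← sq, ← sq, sq_abs]
    rw [this]
  have hsq : (U * D * star U) ^ 2 = Yᴴ * Y := by
    have hY2 : Yᴴ * Y = U * (D * D) * star U := by
      rw [hY.eq]
      conv_lhs => rw [hY.spectral_theorem]
      rw [hDD]
      calc U * diagonal (RCLike.ofReal ∘ hY.eigenvalues) * star U *
            (U * diagonal (RCLike.ofReal ∘ hY.eigenvalues) * star U)
          = U * diagonal (RCLike.ofReal ∘ hY.eigenvalues) * (star U * U) *
            diagonal (RCLike.ofReal ∘ hY.eigenvalues) * star U := by noncomm_ring
        _ = U * (diagonal (RCLike.ofReal ∘ hY.eigenvalues) *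
            diagonal (RCLike.ofReal ∘ hY.eigenvalues)) * star U := by
            rw [hUU]; noncomm_ring
    rw [hY2, pow_two]
    calc U * D * star U * (U * D * star U)
        = U * D * (star U * U) * D * star U := by noncomm_ring
      _ = U * (D * D) * star U := by rw [hUU]; noncomm_ring
  have hsqrt : U * D * star U =
      (Matrix.posSemidef_conjTranspose_mul_self Y).1.eigenvectorUnitary.1 *
      diagonal (((↑) : ℝ → ℂ) ∘ (√·) ∘ (Matrix.posSemidef_conjTranspose_mul_self Y).1.eigenvalues) *
      (star (Matrix.posSemidef_conjTranspose_mul_self Y).1.eigenvectorUnitary : Matrix n n ℂ) := by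
    have hH := (Matrix.posSemidef_conjTranspose_mul_self Y).1
    have h2 : hH.eigenvectorUnitary.1 *
        diagonal (((↑) : ℝ → ℂ) ∘ (√·) ∘ hH.eigenvalues) *
        (star hH.eigenvectorUnitary : Matrix n n ℂ) = cfc Real.sqrt (Yᴴ * Y) := by
      rw [hH.cfc_eq]; rfl
    have h1 : U * D * star U = cfc (fun x : ℝ => |x|) Y := by
      rw [hY.cfc_eq]; rfl
    have h3 : Yᴴ * Y = cfc (fun x : ℝ => x ^ 2) Y := by
      rw [cfc_pow_id Y 2 hY.isSelfAdjoint, hY.eq, sq]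
    rw [h2, h1, h3, ← cfc_comp Real.sqrt (fun x : ℝ => x ^ 2) Y hY.isSelfAdjoint]
    congr 1
    funext x
    exact (Real.sqrt_sq_eq_abs x).symm
  rw [traceNorm, ← hsqrt, Matrix.trace_mul_cycle, hUU, Matrix.one_mul, hDdef,
    Matrix.trace_diagonal]
  rw [Complex.re_sum]
  norm_num

lemma posSemidef_diag_re_nonneg {P : Matrix n n ℂ} (hP : P.PosSemidef) (i : n) :
    0 ≤ (P i i).re := by
  have h := hP.diag_nonneg (i := i)
  rw [Complex.nonneg_iff] at h
  exact h.1

lemma key_bound {Y P N : Matrix n n ℂ} (hY : Y.IsHermitian)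
    (hP : P.PosSemidef) (hN : N.PosSemidef) (hPN : P - N = Y) :
    ∑ i, |hY.eigenvalues i| ≤ P.trace.re + N.trace.re := by
  set U : Matrix n n ℂ := (hY.eigenvectorUnitary : Matrix n n ℂ) with hUdef
  have hUU : U * star U = 1 := hY.eigenvectorUnitary.2.2
  have hP' : (star U * P * U).PosSemidef := by
    simpa [Matrix.star_eq_conjTranspose] using hP.conjTranspose_mul_mul_same U
  have hN' : (star U * N * U).PosSemidef := by
    simpa [Matrix.star_eq_conjTranspose] using hN.conjTranspose_mul_mul_same U
  have h0 : star U * Y * U = diagonal (RCLike.ofReal ∘ hY.eigenvalues) :=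
    by
      have hUU' : star U * U = 1 := hY.eigenvectorUnitary.2.1
      have hs : Y = U * diagonal (RCLike.ofReal ∘ hY.eigenvalues) * star U := hY.spectral_theorem
      conv_lhs => rw [hs]
      rw [← mul_assoc, ← mul_assoc, hUU', one_mul, mul_assoc, hUU', mul_one]
  have h1 : star U * Y * U = star U * P * U - star U * N * U := by
    conv_lhs => rw [← hPN]
    noncomm_ring
  have hdiag : diagonal (RCLike.ofReal ∘ hY.eigenvalues) =
      star U * P * U - star U * N * U := h0.symm.trans h1
  have hentry : ∀ i, (hY.eigenvalues i : ℝ) =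
      ((star U * P * U) i i).re - ((star U * N * U) i i).re := by
    intro i
    have h2 := congrArg (fun M : Matrix n n ℂ => (M i i).re) hdiag
    simpa using h2
  have htrP : (star U * P * U).trace = P.trace := by
    rw [Matrix.trace_mul_cycle, hUU, Matrix.one_mul]
  have htrN : (star U * N * U).trace = N.trace := by
    rw [Matrix.trace_mul_cycle, hUU, Matrix.one_mul]
  calc ∑ i, |hY.eigenvalues i|
      ≤ ∑ i, (((star U * P * U) i i).re + ((star U * N * U) i i).re) := by
        refine Finset.sum_le_sum fun i _ => ?_
        rw [hentry i]
        have h1 := posSemidef_diag_re_nonneg hP' i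
        have h2 := posSemidef_diag_re_nonneg hN' i
        calc |((star U * P * U) i i).re - ((star U * N * U) i i).re|
            ≤ |((star U * P * U) i i).re| + |((star U * N * U) i i).re| := abs_sub _ _
          _ = _ := by rw [abs_of_nonneg h1, abs_of_nonneg h2]
    _ = P.trace.re + N.trace.re := by
        rw [Finset.sum_add_distrib, ← htrP, ← htrN]
        simp [Matrix.trace, Matrix.diag, Complex.re_sum]

end aux

/-- A positive trace-preserving map is a trace-norm contraction on Hermitian matrices. -/
theorem positive_trace_preserving_contraction (d : ℕ)
    (Φ : Matrix (Fin d) (Fin d) ℂ →ₗ[ℂ] Matrix (Fin d) (Fin d) ℂ)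
    (hpos : ∀ X : Matrix (Fin d) (Fin d) ℂ, X.PosSemidef → (Φ X).PosSemidef)
    (htr : ∀ X : Matrix (Fin d) (Fin d) ℂ, (Φ X).trace = X.trace) :
    ∀ X : Matrix (Fin d) (Fin d) ℂ, X.IsHermitian → traceNorm (Φ X) ≤ traceNorm X := by
  intro X hX
  set U : Matrix (Fin d) (Fin d) ℂ := (hX.eigenvectorUnitary : Matrix (Fin d) (Fin d) ℂ)
    with hUdef
  have hUU : star U * U = 1 := hX.eigenvectorUnitary.2.1
  set μ := hX.eigenvalues with hμdef
  set P : Matrix (Fin d) (Fin d) ℂ :=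
    U * diagonal (fun i => ((max (μ i) 0 : ℝ) : ℂ)) * star U with hPdef
  set N : Matrix (Fin d) (Fin d) ℂ :=
    U * diagonal (fun i => ((max (-μ i) 0 : ℝ) : ℂ)) * star U with hNdef
  have hPps : P.PosSemidef := by
    have h : (diagonal (fun i => ((max (μ i) 0 : ℝ) : ℂ))).PosSemidef :=
      PosSemidef.diagonal fun i => by
        simp only [Pi.zero_apply]; exact_mod_cast le_max_right (μ i) 0
    exact h.mul_mul_conjTranspose_same U
  have hNps : N.PosSemidef := by
    have h : (diagonal (fun i => ((max (-μ i) 0 : ℝ) : ℂ))).PosSemidef :=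
      PosSemidef.diagonal fun i => by
        simp only [Pi.zero_apply]; exact_mod_cast le_max_right (-μ i) 0
    exact h.mul_mul_conjTranspose_same U
  have hXPN : P - N = X := by
    have hD : diagonal (fun i => ((max (μ i) 0 : ℝ) : ℂ)) -
        diagonal (fun i => ((max (-μ i) 0 : ℝ) : ℂ)) =
        diagonal (RCLike.ofReal ∘ μ) := by
      rw [diagonal_sub]
      have : (fun i => ((max (μ i) 0 : ℝ) : ℂ) - ((max (-μ i) 0 : ℝ) : ℂ))
          = fun i => (RCLike.ofReal ∘ μ) i := by
        funext i
        show ((max (μ i) 0 : ℝ) : ℂ) - ((max (-μ i) 0 : ℝ) : ℂ) = ((μ i : ℝ) : ℂ)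
        norm_cast
        rcases le_total (μ i) 0 with h | h
        · rw [max_eq_right h, max_eq_left (by linarith)]; ring
        · rw [max_eq_left h, max_eq_right (by linarith)]; ring
      rw [this]
    calc P - N = U * (diagonal (fun i => ((max (μ i) 0 : ℝ) : ℂ)) -
          diagonal (fun i => ((max (-μ i) 0 : ℝ) : ℂ))) * star U := by
          rw [hPdef, hNdef]; noncomm_ring
      _ = U * diagonal (RCLike.ofReal ∘ μ) * star U := by rw [hD]
      _ = X := (hX.spectral_theorem).symm
  have hΦX : (Φ X).IsHermitian := by
    rw [← hXPN, map_sub]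
    exact ((hpos P hPps).isHermitian).sub ((hpos N hNps).isHermitian)
  rw [traceNorm_hermitian_eq hΦX, traceNorm_hermitian_eq hX]
  have hkey : ∑ i, |hΦX.eigenvalues i| ≤ (Φ P).trace.re + (Φ N).trace.re := by
    refine key_bound hΦX (hpos P hPps) (hpos N hNps) ?_
    rw [← map_sub, hXPN]
  rw [htr P, htr N] at hkey
  refine hkey.trans_eq ?_
  have htrP : P.trace = ∑ i, ((max (μ i) 0 : ℝ) : ℂ) := by
    rw [hPdef, Matrix.trace_mul_cycle, hUU, Matrix.one_mul, Matrix.trace_diagonal]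
  have htrN : N.trace = ∑ i, ((max (-μ i) 0 : ℝ) : ℂ) := by
    rw [hNdef, Matrix.trace_mul_cycle, hUU, Matrix.one_mul, Matrix.trace_diagonal]
  rw [htrP, htrN, Complex.re_sum, Complex.re_sum, ← Finset.sum_add_distrib]
  refine Finset.sum_congr rfl fun i _ => ?_
  simp only [Complex.ofReal_re]
  rcases le_total (μ i) 0 with h | h
  · rw [abs_of_nonpos h, max_eq_right h, max_eq_left (by linarith)]; ring
  · rw [abs_of_nonneg h, max_eq_left h, max_eq_right (by linarith)]; ring
end
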